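/- Let β₁, β₂ be bilinear forms on modules S₁, S₂ over Cl(V₁), Cl(V₂) respectively, where S₁ = S₁⁰ ⊕ S₁¹ is ℤ₂-graded. Suppose: ρᵢ(vᵢ) is βᵢ-symmetric or βᵢ-skew with sign τ(βᵢ) ∈ {±1} for all vᵢ ∈ Vᵢ, and S₁⁰, S₁¹ are β₁-orthogonal or β₁-isotropic with sign ι(β₁) ∈ {±1} (ι = +1 meaning β₁(S₁⁰,S₁¹)=0, ι = −1 meaning β₁|S₁⁰ = β₁|S₁¹ = 0). If τ(β₂) = ι(β₁)τ(β₁), then for the tensor product form β = β₁ ⊗ β₂ on the Cl(V₁ ⊕ V₂)-module S₁ ⊗ S₂ (with the graded action), Clifford multiplication by every v ∈ V₁ ⊕ V₂ is β-symmetric or β-skew with common sign τ(β) = τ(β₁). -/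
import Mathlib


open scoped TensorProduct

/-!
STATEMENT 12: Let `β₁, β₂` be bilinear forms on modules `S₁, S₂` over
`Cl(V₁), Cl(V₂)`, where `S₁ = S₁⁰ ⊕ S₁¹` is ℤ₂-graded (grading involution
`α₁`, the Clifford actions `ρ₁(v₁)` being odd).  Suppose each `ρᵢ(vᵢ)` is
`βᵢ`-symmetric or `βᵢ`-skew with a common sign `τ(βᵢ) ∈ {±1}`, and the
graded parts of `S₁` are `β₁`-orthogonal or `β₁`-isotropic with sign
`ι(β₁) ∈ {±1}` (expressed as `β₁(α₁ s, t) = ι(β₁) β₁(s, α₁ t)`).  If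
`τ(β₂) = ι(β₁) τ(β₁)`, then for the form `β = β₁ ⊗ β₂` on the
`Cl(V₁ ⊕ V₂)`-module `S₁ ⊗ S₂` with the graded action
(`v₁` acting as `ρ₁(v₁) ⊗ id`, `v₂` as `α₁ ⊗ ρ₂(v₂)`), Clifford
multiplication by every `v ∈ V₁ ⊕ V₂` is `β`-symmetric or `β`-skew with the
common sign `τ(β) = τ(β₁)`.
-/

theorem tensor_form_type
    (V₁ V₂ S₁ S₂ : Type*)
    [AddCommGroup V₁] [Module ℝ V₁] [AddCommGroup V₂] [Module ℝ V₂]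
    [AddCommGroup S₁] [Module ℝ S₁] [AddCommGroup S₂] [Module ℝ S₂]
    (ρ₁ : V₁ →ₗ[ℝ] Module.End ℝ S₁) (ρ₂ : V₂ →ₗ[ℝ] Module.End ℝ S₂)
    (α₁ : Module.End ℝ S₁) (hα₁ : α₁ ∘ₗ α₁ = LinearMap.id)
    (hodd : ∀ v : V₁, α₁ ∘ₗ ρ₁ v = -(ρ₁ v ∘ₗ α₁))
    (β₁ : LinearMap.BilinForm ℝ S₁) (β₂ : LinearMap.BilinForm ℝ S₂)
    (τ₁ τ₂ ι₁ : ℝ)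
    (hτ₁pm : τ₁ = 1 ∨ τ₁ = -1) (hτ₂pm : τ₂ = 1 ∨ τ₂ = -1)
    (hι₁pm : ι₁ = 1 ∨ ι₁ = -1)
    -- the types of `β₁` and `β₂`
    (hτ₁ : ∀ (v : V₁) (s t : S₁), β₁ (ρ₁ v s) t = τ₁ * β₁ s (ρ₁ v t))
    (hτ₂ : ∀ (v : V₂) (s t : S₂), β₂ (ρ₂ v s) t = τ₂ * β₂ s (ρ₂ v t))
    -- the isotropy of `β₁`
    (hι₁ : ∀ s t : S₁, β₁ (α₁ s) t = ι₁ * β₁ s (α₁ t))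
    -- the compatibility assumption `τ(β₂) = ι(β₁)τ(β₁)`
    (hcomp : τ₂ = ι₁ * τ₁)
    -- `β = β₁ ⊗ β₂` and the graded Clifford action on `S₁ ⊗ S₂`
    (β : LinearMap.BilinForm ℝ (S₁ ⊗[ℝ] S₂))
    (hβ : ∀ (s₁ t₁ : S₁) (s₂ t₂ : S₂),
      β (s₁ ⊗ₜ s₂) (t₁ ⊗ₜ t₂) = β₁ s₁ t₁ * β₂ s₂ t₂) :
    -- multiplication by `v₁ ∈ V₁` has type `τ(β) = τ(β₁)` …
    (∀ (v : V₁) (s t : S₁ ⊗[ℝ] S₂),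
      β (TensorProduct.map (ρ₁ v) LinearMap.id s) t =
        τ₁ * β s (TensorProduct.map (ρ₁ v) LinearMap.id t)) ∧
    -- … and so does multiplication by `v₂ ∈ V₂`
    (∀ (v : V₂) (s t : S₁ ⊗[ℝ] S₂),
      β (TensorProduct.map α₁ (ρ₂ v) s) t =
        τ₁ * β s (TensorProduct.map α₁ (ρ₂ v) t)) := by

  have hι₁sq : ι₁ * ι₁ = 1 := by rcases hι₁pm with h | h <;> subst h <;> norm_num
  constructor
  · intro v s t
    induction s using TensorProduct.induction_on with
    | zero => simp
    | tmul s₁ s₂ =>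
      induction t using TensorProduct.induction_on with
      | zero => simp
      | tmul t₁ t₂ =>
        simp only [TensorProduct.map_tmul, LinearMap.id_coe, id_eq, hβ, hτ₁ v s₁ t₁]
        ring
      | add x y hx hy => simp only [map_add, hx, hy]; ring
    | add x y hx hy =>
      simp only [map_add, LinearMap.add_apply, hx, hy]; ring
  · intro v s t
    induction s using TensorProduct.induction_on with
    | zero => simp
    | tmul s₁ s₂ =>
      induction t using TensorProduct.induction_on with
      | zero => simp
      | tmul t₁ t₂ =>
        simp only [TensorProduct.map_tmul, hβ, hι₁ s₁, hτ₂ v s₂, hcomp]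
        rcases hι₁pm with h | h <;> subst h <;> ring
      | add x y hx hy => simp only [map_add, hx, hy]; ring
    | add x y hx hy =>
      simp only [map_add, LinearMap.add_apply, hx, hy]; ring
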